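/- arXiv:1403.7062 — 6 statements merged into one kernel-verified Lean document; each statement's English description precedes it below -/
import Mathlib

section
/- The limit of -x · ln_q(x) as x tends to 0 from the right equals 0 if and only if q > 0. -/
open Real Filter Topology

/-- The deformed logarithm (q-logarithm): `ln_q x = (x^(q-1) - 1)/(q-1)` for `q ≠ 1`,
and `ln x` for `q = 1`. -/
noncomputable def lnq (q x : ℝ) : ℝ := if q = 1 then Real.log x else (x ^ (q - 1) - 1) / (q - 1)

lemma lnq_key (q : ℝ) (hq : q ≠ 1) :
    (fun x : ℝ => -(x * lnq q x)) =ᶠ[𝓝[>] (0:ℝ)] fun x => (x ^ q - x) / (1 - q) := by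
  filter_upwards [self_mem_nhdsWithin] with x (hx : 0 < x)
  have h1 : x * x ^ (q - 1) = x ^ q := by
    nth_rewrite 1 [← Real.rpow_one x]
    rw [← Real.rpow_add hx]; ring_nf
  have h2 : x * (x ^ (q - 1) - 1) = x ^ q - x := by rw [mul_sub, h1]; ring
  simp only [lnq, if_neg hq]
  field_simp [sub_ne_zero.mpr hq, sub_ne_zero.mpr (Ne.symm hq)]
  rw [h2]; ring

theorem tendsto_neg_mul_lnq_iff (q : ℝ) :
    Filter.Tendsto (fun x : ℝ => -(x * lnq q x)) (nhdsWithin 0 (Set.Ioi 0)) (nhds 0) ↔ 0 < q := by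
  constructor
  · intro h
    by_contra hq
    push_neg at hq
    have hq1 : q ≠ 1 := by linarith
    rcases eq_or_lt_of_le hq with hq0 | hq0
    · -- q = 0 : limit is 1
      have h1 : Tendsto (fun x : ℝ => -(x * lnq q x)) (𝓝[>] 0) (𝓝 1) := by
        have : Tendsto (fun x : ℝ => (x ^ q - x) / (1 - q)) (𝓝[>] 0) (𝓝 1) := by
          subst hq0
          have : ∀ᶠ x in 𝓝[>] (0:ℝ), (x ^ (0:ℝ) - x) / (1 - 0) = 1 - x := by
            filter_upwards [self_mem_nhdsWithin] with x (hx : 0 < x)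
            rw [Real.rpow_zero]; ring
          rw [tendsto_congr' this]
          have := (tendsto_id.const_sub (1:ℝ)).mono_left
            (nhdsWithin_le_nhds : 𝓝[>] (0:ℝ) ≤ 𝓝 0)
          simpa using this
        exact this.congr' (lnq_key q hq1).symm
      have := tendsto_nhds_unique h h1
      norm_num at this
    · -- q < 0 : limit is atTop
      have h1 : Tendsto (fun x : ℝ => -(x * lnq q x)) (𝓝[>] 0) atTop := by
        have hpow : Tendsto (fun x : ℝ => x ^ q) (𝓝[>] 0) atTop := by
          have h2 : Tendsto (fun x : ℝ => (x⁻¹) ^ (-q)) (𝓝[>] 0) atTop :=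
            (tendsto_rpow_atTop (by linarith)).comp tendsto_inv_nhdsGT_zero
          refine h2.congr' ?_
          filter_upwards [self_mem_nhdsWithin] with x (hx : 0 < x)
          rw [Real.inv_rpow hx.le, ← Real.rpow_neg hx.le, neg_neg]
        have hx0 : Tendsto (fun x : ℝ => x ^ q - x) (𝓝[>] 0) atTop := by
          have hid : Tendsto (fun x : ℝ => -x) (𝓝[>] 0) (𝓝 (-0)) :=
            (tendsto_id.mono_left nhdsWithin_le_nhds).neg
          simpa [sub_eq_add_neg] using hpow.atTop_add hid
        have := hx0.atTop_div_const (by linarith : (0:ℝ) < 1 - q)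
        exact this.congr' (lnq_key q hq1).symm
      exact not_tendsto_nhds_of_tendsto_atTop h1 0 h
  · intro hq
    by_cases hq1 : q = 1
    · subst hq1
      have := tendsto_log_mul_rpow_nhdsGT_zero zero_lt_one
      have h2 : Tendsto (fun x : ℝ => -(log x * x ^ (1:ℝ))) (𝓝[>] 0) (𝓝 0) := by
        simpa using this.neg
      refine h2.congr' ?_
      filter_upwards [self_mem_nhdsWithin] with x (hx : 0 < x)
      simp [lnq, Real.rpow_one]; ring
    · have hpow : Tendsto (fun x : ℝ => x ^ q) (𝓝[>] 0) (𝓝 0) := by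
        have := (Real.continuousAt_rpow (0, q) (Or.inr hq)).tendsto
        have h3 : Tendsto (fun x : ℝ => (x, q)) (𝓝[>] 0) (𝓝 (0, q)) :=
          (Continuous.tendsto (by continuity) 0).mono_left nhdsWithin_le_nhds
        have h4 := this.comp h3
        simpa [Function.comp_def, Real.zero_rpow (ne_of_gt hq)] using h4
      have hid : Tendsto (fun x : ℝ => x) (𝓝[>] 0) (𝓝 0) :=
        tendsto_id.mono_left nhdsWithin_le_nhds
      have h5 : Tendsto (fun x : ℝ => (x ^ q - x) / (1 - q)) (𝓝[>] 0) (𝓝 0) := by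
        have := (hpow.sub hid).div_const (1 - q)
        simpa using this
      exact h5.congr' (lnq_key q hq1).symm
end

section
/- Let q ≥ 1 and let a, b, c, d ≥ 0 with a + b + c + d = 1. Then (a+b)^q + (c+d)^q + (a+c)^q + (b+d)^q ≤ 1 + a^q + b^q + c^q + d^q. -/
open Real Set

private lemma rpow_le_self_aux {x q : ℝ} (hx : 0 ≤ x) (hx1 : x ≤ 1) (hq : 1 ≤ q) :
    x ^ q ≤ x := by
  rcases eq_or_lt_of_le hx with h | h
  · rw [← h, Real.zero_rpow (by linarith)]
  · calc x ^ q ≤ x ^ (1 : ℝ) := Real.rpow_le_rpow_of_exponent_ge h hx1 hq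
    _ = x := Real.rpow_one x

private lemma convex_pt {q u v l m : ℝ} (hq : 1 ≤ q) (hu : 0 ≤ u) (hv : 0 ≤ v)
    (hl : 0 ≤ l) (hm : 0 ≤ m) (hlm : l + m = 1) :
    (l * u + m * v) ^ q ≤ l * u ^ q + m * v ^ q := by
  have := (convexOn_rpow hq).2 (mem_Ici.2 hu) (mem_Ici.2 hv) hl hm hlm
  simpa [smul_eq_mul] using this

private lemma scalar_ineq {l1 l2 L1 L2 F1 F2 : ℝ} (hlm : l1 + l2 = 1)
    (h1 : L1 ≤ l1) (h2 : L2 ≤ l2) (hF1 : F1 ≤ 1) (hF2 : F2 ≤ 1)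
    (hF1n : 0 ≤ F1) (hF2n : 0 ≤ F2) :
    l1 * F1 + l2 * F2 + L1 + L2 ≤ 1 + L1 * F1 + L2 * F2 := by
  nlinarith [mul_nonneg (sub_nonneg.2 h1) (sub_nonneg.2 hF1),
    mul_nonneg (sub_nonneg.2 h2) (sub_nonneg.2 hF2)]

set_option maxHeartbeats 1000000 in
private lemma key_superadd {q x1 y1 x2 y2 : ℝ} (hq : 1 ≤ q)
    (hx1 : 0 ≤ x1) (hy1 : 0 ≤ y1) (hx2 : 0 ≤ x2) (hy2 : 0 ≤ y2) :
    (x1 + y1) ^ q - x1 ^ q - y1 ^ q + ((x2 + y2) ^ q - x2 ^ q - y2 ^ q) ≤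
      (x1 + x2 + (y1 + y2)) ^ q - (x1 + x2) ^ q - (y1 + y2) ^ q := by
  have hq0 : q ≠ 0 := by positivity
  rcases eq_or_lt_of_le (add_nonneg hx1 hy1) with hs1 | hs1
  · have h1 : x1 = 0 := by linarith
    have h2 : y1 = 0 := by linarith
    simp [h1, h2, Real.zero_rpow hq0]
  rcases eq_or_lt_of_le (add_nonneg hx2 hy2) with hs2 | hs2
  · have h1 : x2 = 0 := by linarith
    have h2 : y2 = 0 := by linarith
    simp [h1, h2, Real.zero_rpow hq0]
  obtain ⟨s1, hs1d⟩ : ∃ s1 : ℝ, s1 = x1 + y1 := ⟨_, rfl⟩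
  obtain ⟨s2, hs2d⟩ : ∃ s2 : ℝ, s2 = x2 + y2 := ⟨_, rfl⟩
  obtain ⟨s, hsd⟩ : ∃ s : ℝ, s = s1 + s2 := ⟨_, rfl⟩
  rw [← hs1d] at hs1
  rw [← hs2d] at hs2
  have hs : 0 < s := by rw [hsd]; linarith
  obtain ⟨l1, hl1d⟩ : ∃ l1 : ℝ, l1 = s1 / s := ⟨_, rfl⟩
  obtain ⟨l2, hl2d⟩ : ∃ l2 : ℝ, l2 = s2 / s := ⟨_, rfl⟩
  obtain ⟨u1, hu1d⟩ : ∃ u1 : ℝ, u1 = x1 / s1 := ⟨_, rfl⟩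
  obtain ⟨v1, hv1d⟩ : ∃ v1 : ℝ, v1 = y1 / s1 := ⟨_, rfl⟩
  obtain ⟨u2, hu2d⟩ : ∃ u2 : ℝ, u2 = x2 / s2 := ⟨_, rfl⟩
  obtain ⟨v2, hv2d⟩ : ∃ v2 : ℝ, v2 = y2 / s2 := ⟨_, rfl⟩
  have hl1 : 0 ≤ l1 := by rw [hl1d]; positivity
  have hl2 : 0 ≤ l2 := by rw [hl2d]; positivity
  have hlm : l1 + l2 = 1 := by
    rw [hl1d, hl2d, ← add_div, ← hsd, div_self hs.ne']
  have hu1 : 0 ≤ u1 := by rw [hu1d]; exact div_nonneg hx1 hs1.le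
  have hv1 : 0 ≤ v1 := by rw [hv1d]; exact div_nonneg hy1 hs1.le
  have hu2 : 0 ≤ u2 := by rw [hu2d]; exact div_nonneg hx2 hs2.le
  have hv2 : 0 ≤ v2 := by rw [hv2d]; exact div_nonneg hy2 hs2.le
  have hu1' : u1 + v1 = 1 := by
    rw [hu1d, hv1d, ← add_div, ← hs1d, div_self hs1.ne']
  have hu2' : u2 + v2 = 1 := by
    rw [hu2d, hv2d, ← add_div, ← hs2d, div_self hs2.ne']
  have hsq : (0:ℝ) < s ^ q := Real.rpow_pos_of_pos hs q
  have hx1e : x1 = s * (l1 * u1) := by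
    rw [hl1d, hu1d]; field_simp
  have hy1e : y1 = s * (l1 * v1) := by
    rw [hl1d, hv1d]; field_simp
  have hx2e : x2 = s * (l2 * u2) := by
    rw [hl2d, hu2d]; field_simp
  have hy2e : y2 = s * (l2 * v2) := by
    rw [hl2d, hv2d]; field_simp
  have hs1e : s1 = s * l1 := by rw [hl1d]; field_simp
  have hs2e : s2 = s * l2 := by rw [hl2d]; field_simp
  have pow_mul : ∀ m : ℝ, 0 ≤ m → (s * m) ^ q = s ^ q * m ^ q := fun m hm =>
    Real.mul_rpow hs.le hm
  have hX : (x1 + x2) ^ q ≤ s ^ q * (l1 * u1 ^ q + l2 * u2 ^ q) := by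
    have h : x1 + x2 = s * (l1 * u1 + l2 * u2) := by rw [hx1e, hx2e]; ring
    rw [h, pow_mul _ (by positivity)]
    exact mul_le_mul_of_nonneg_left (convex_pt hq hu1 hu2 hl1 hl2 hlm) hsq.le
  have hY : (y1 + y2) ^ q ≤ s ^ q * (l1 * v1 ^ q + l2 * v2 ^ q) := by
    have h : y1 + y2 = s * (l1 * v1 + l2 * v2) := by rw [hy1e, hy2e]; ring
    rw [h, pow_mul _ (by positivity)]
    exact mul_le_mul_of_nonneg_left (convex_pt hq hv1 hv2 hl1 hl2 hlm) hsq.le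
  have hS : (x1 + x2 + (y1 + y2)) ^ q = s ^ q := by
    have h : x1 + x2 + (y1 + y2) = s := by rw [hsd, hs1d, hs2d]; ring
    rw [h]
  have e1 : (x1 + y1) ^ q = s ^ q * l1 ^ q := by
    rw [← hs1d, hs1e, pow_mul _ hl1]
  have e2 : (x2 + y2) ^ q = s ^ q * l2 ^ q := by
    rw [← hs2d, hs2e, pow_mul _ hl2]
  have ex1 : x1 ^ q = s ^ q * (l1 ^ q * u1 ^ q) := by
    rw [hx1e, pow_mul _ (by positivity), Real.mul_rpow hl1 hu1]
  have ey1 : y1 ^ q = s ^ q * (l1 ^ q * v1 ^ q) := by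
    rw [hy1e, pow_mul _ (by positivity), Real.mul_rpow hl1 hv1]
  have ex2 : x2 ^ q = s ^ q * (l2 ^ q * u2 ^ q) := by
    rw [hx2e, pow_mul _ (by positivity), Real.mul_rpow hl2 hu2]
  have ey2 : y2 ^ q = s ^ q * (l2 ^ q * v2 ^ q) := by
    rw [hy2e, pow_mul _ (by positivity), Real.mul_rpow hl2 hv2]
  have hF1 : u1 ^ q + v1 ^ q ≤ 1 := by
    have a1 := rpow_le_self_aux hu1 (by linarith) hq
    have a2 := rpow_le_self_aux hv1 (by linarith) hq
    linarith
  have hF2 : u2 ^ q + v2 ^ q ≤ 1 := by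
    have a1 := rpow_le_self_aux hu2 (by linarith) hq
    have a2 := rpow_le_self_aux hv2 (by linarith) hq
    linarith
  have hl1q : l1 ^ q ≤ l1 := rpow_le_self_aux hl1 (by linarith) hq
  have hl2q : l2 ^ q ≤ l2 := rpow_le_self_aux hl2 (by linarith) hq
  have scalar := scalar_ineq hlm hl1q hl2q hF1 hF2 (by positivity) (by positivity)
  have main := mul_le_mul_of_nonneg_left scalar hsq.le
  rw [e1, e2, hS, ex1, ey1, ex2, ey2]
  ring_nf at hX hY main ⊢
  linarith [hX, hY, main]

theorem tsallis_subadditivity_two_bits (q a b c d : ℝ) (hq : 1 ≤ q)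
    (ha : 0 ≤ a) (hb : 0 ≤ b) (hc : 0 ≤ c) (hd : 0 ≤ d) (hsum : a + b + c + d = 1) :
    (a + b) ^ q + (c + d) ^ q + (a + c) ^ q + (b + d) ^ q ≤
      1 + a ^ q + b ^ q + c ^ q + d ^ q := by
  have key := key_superadd hq ha hb hc hd
  have h1 : a + c + (b + d) = 1 := by linarith
  rw [h1, Real.one_rpow] at key
  linarith
end

section
/- Let q > 1 and let X = Diag(a,b,c,d) with a,b,c,d ≥ 0 summing to 1, viewed as a state on C^2 ⊗ C^2 with marginals D1 = Diag(a+b, c+d) and D2 = Diag(a+c, b+d). Then S_q(D) ≤ S_q(D1) + S_q(D2), where S_q(Diag(p_1,...,p_n)) = -Σ_i p_i · ln_q(p_i). -/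
/-- The Tsallis entropy of a finite probability vector `p`: `S_q(p) = -∑ i, p i * ln_q (p i)`. -/
noncomputable def tsallisEntropyVec (q : ℝ) {ι : Type*} [Fintype ι] (p : ι → ℝ) : ℝ :=
  -∑ i, p i * lnq q (p i)

private lemma mul_lnq_eq {q x : ℝ} (hq : 1 < q) (hx : 0 ≤ x) :
    x * lnq q x = (x ^ q - x) / (q - 1) := by
  have hq1 : q ≠ 1 := ne_of_gt hq
  have hxq : x ^ q = x * x ^ (q - 1) := by
    have h : x ^ ((1 : ℝ) + (q - 1)) = x ^ (1 : ℝ) * x ^ (q - 1) :=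
      Real.rpow_add' hx (by linarith)
    simpa [Real.rpow_one] using h
  simp only [lnq, hq1, if_false]
  rw [hxq]
  ring

/-- Convexity step: `(x+y)^q ≤ p₁^(1-q) x^q + p₂^(1-q) y^q` for weights summing to 1. -/
private lemma convex_step {q p₁ p₂ x y : ℝ} (hq : 1 ≤ q) (hp₁ : 0 < p₁) (hp₂ : 0 < p₂)
    (hp : p₁ + p₂ = 1) (hx : 0 ≤ x) (hy : 0 ≤ y) :
    (x + y) ^ q ≤ p₁ ^ (1 - q) * x ^ q + p₂ ^ (1 - q) * y ^ q := by
  have key := Real.rpow_arith_mean_le_arith_mean_rpow (Finset.univ : Finset (Fin 2))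
    ![p₁, p₂] ![x / p₁, y / p₂]
    (by intro i _; fin_cases i <;> simp [hp₁.le, hp₂.le])
    (by simp [Fin.sum_univ_two, hp])
    (by intro i _; fin_cases i <;> simp [div_nonneg, hx, hy, hp₁.le, hp₂.le]) hq
  have h1 : p₁ * (x / p₁) = x := by field_simp
  have h2 : p₂ * (y / p₂) = y := by field_simp
  rw [Fin.sum_univ_two, Fin.sum_univ_two] at key
  simp only [Matrix.cons_val_zero, Matrix.cons_val_one, Matrix.head_cons] at key
  rw [h1, h2] at key
  refine key.trans_eq ?_
  rw [Real.div_rpow hx hp₁.le, Real.div_rpow hy hp₂.le]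
  rw [Real.rpow_sub hp₁, Real.rpow_sub hp₂, Real.rpow_one, Real.rpow_one]
  field_simp

/-- `p^(1-q) (x^q + y^q) ≤ x^q + y^q + p - p^q` when `x + y = p ≤ 1`. -/
private lemma weight_step {q p x y : ℝ} (hq : 1 ≤ q) (hp : 0 < p) (hp1 : p ≤ 1)
    (hx : 0 ≤ x) (hy : 0 ≤ y) (hxy : x + y = p) :
    p ^ (1 - q) * (x ^ q + y ^ q) ≤ x ^ q + y ^ q + p - p ^ q := by
  have hxle : x ≤ p := by linarith
  have hyle : y ≤ p := by linarith
  have hq0 : (0:ℝ) ≤ q - 1 := by linarith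
  have hpq : x ^ q + y ^ q ≤ p ^ q := by
    have hx' : x ^ q ≤ x * p ^ (q - 1) := by
      have : x ^ q = x * x ^ (q - 1) := by
        have h := Real.rpow_add' hx (show (1:ℝ) + (q - 1) ≠ 0 by linarith)
        simpa [Real.rpow_one] using h
      rw [this]
      exact mul_le_mul_of_nonneg_left (Real.rpow_le_rpow hx hxle hq0) hx
    have hy' : y ^ q ≤ y * p ^ (q - 1) := by
      have : y ^ q = y * y ^ (q - 1) := by
        have h := Real.rpow_add' hy (show (1:ℝ) + (q - 1) ≠ 0 by linarith)
        simpa [Real.rpow_one] using h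
      rw [this]
      exact mul_le_mul_of_nonneg_left (Real.rpow_le_rpow hy hyle hq0) hy
    have hpq' : p * p ^ (q - 1) = p ^ q := by
      have h := Real.rpow_add' hp.le (show (1:ℝ) + (q - 1) ≠ 0 by linarith)
      simp [Real.rpow_one] at h
      linarith [h]
    calc x ^ q + y ^ q ≤ x * p ^ (q - 1) + y * p ^ (q - 1) := add_le_add hx' hy'
      _ = (x + y) * p ^ (q - 1) := by ring
      _ = p ^ q := by rw [hxy, hpq']
  have hone : 1 ≤ p ^ (1 - q) :=
    Real.one_le_rpow_of_pos_of_le_one_of_nonpos hp hp1 (by linarith)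
  have hmul : p ^ (1 - q) * p ^ q = p := by
    rw [← Real.rpow_add hp]; norm_num
  have hxyq : 0 ≤ x ^ q + y ^ q := by positivity
  nlinarith [mul_le_mul_of_nonneg_left hpq (show (0:ℝ) ≤ p ^ (1 - q) - 1 by linarith)]

/-- The core inequality. -/
private lemma core_ineq {q a b c d : ℝ} (hq : 1 < q)
    (ha : 0 ≤ a) (hb : 0 ≤ b) (hc : 0 ≤ c) (hd : 0 ≤ d) (hsum : a + b + c + d = 1) :
    (a + c) ^ q + (b + d) ^ q ≤
      (a + b) - (a + b) ^ q + ((c + d) - (c + d) ^ q) + (a ^ q + b ^ q + c ^ q + d ^ q) := by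
  have hq' : 1 ≤ q := hq.le
  rcases eq_or_lt_of_le (by positivity : (0:ℝ) ≤ a + b) with h1 | hp₁
  · -- a + b = 0, so a = b = 0
    have ha0 : a = 0 := by linarith
    have hb0 : b = 0 := by linarith
    have hcd : c + d = 1 := by linarith
    have h0 : (0:ℝ) ^ q = 0 := Real.zero_rpow (by linarith)
    rw [ha0, hb0, hcd]
    simp [h0, Real.one_rpow]
  rcases eq_or_lt_of_le (by positivity : (0:ℝ) ≤ c + d) with h2 | hp₂
  · have hc0 : c = 0 := by linarith
    have hd0 : d = 0 := by linarith
    have hab : a + b = 1 := by linarith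
    have h0 : (0:ℝ) ^ q = 0 := Real.zero_rpow (by linarith)
    rw [hc0, hd0, hab]
    simp [h0, Real.one_rpow]
  -- main case
  have hp : (a + b) + (c + d) = 1 := by linarith
  have s1 : (a + c) ^ q ≤ (a + b) ^ (1 - q) * a ^ q + (c + d) ^ (1 - q) * c ^ q :=
    convex_step hq' hp₁ hp₂ hp ha hc
  have s2 : (b + d) ^ q ≤ (a + b) ^ (1 - q) * b ^ q + (c + d) ^ (1 - q) * d ^ q :=
    convex_step hq' hp₁ hp₂ hp hb hd
  have w1 : (a + b) ^ (1 - q) * (a ^ q + b ^ q) ≤ a ^ q + b ^ q + (a + b) - (a + b) ^ q :=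
    weight_step hq' hp₁ (by linarith) ha hb rfl
  have w2 : (c + d) ^ (1 - q) * (c ^ q + d ^ q) ≤ c ^ q + d ^ q + (c + d) - (c + d) ^ q :=
    weight_step hq' hp₂ (by linarith) hc hd rfl
  nlinarith [s1, s2, w1, w2]

/-- Subadditivity of the Tsallis entropy for the diagonal state `D = Diag(a,b,c,d)` on
`ℂ² ⊗ ℂ²`, with marginals `D₁ = Diag(a+b, c+d)` and `D₂ = Diag(a+c, b+d)`. -/
theorem tsallis_subadditive_diag (q a b c d : ℝ) (hq : 1 < q)
    (ha : 0 ≤ a) (hb : 0 ≤ b) (hc : 0 ≤ c) (hd : 0 ≤ d) (hsum : a + b + c + d = 1) :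
    tsallisEntropyVec q (![a, b, c, d]) ≤
      tsallisEntropyVec q (![a + b, c + d]) + tsallisEntropyVec q (![a + c, b + d]) := by
  have hq1 : (0:ℝ) < q - 1 := by linarith
  have hab : 0 ≤ a + b := by positivity
  have hcd : 0 ≤ c + d := by positivity
  have hac : 0 ≤ a + c := by positivity
  have hbd : 0 ≤ b + d := by positivity
  have e1 : tsallisEntropyVec q (![a, b, c, d]) =
      -(((a ^ q - a) + (b ^ q - b) + (c ^ q - c) + (d ^ q - d)) / (q - 1)) := by
    simp only [tsallisEntropyVec, Fin.sum_univ_four, Matrix.cons_val_zero, Matrix.cons_val_one,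
      Matrix.head_cons, Matrix.cons_val_two, Matrix.tail_cons, Matrix.cons_val_three]
    rw [mul_lnq_eq hq ha, mul_lnq_eq hq hb, mul_lnq_eq hq hc, mul_lnq_eq hq hd]
    ring
  have e2 : tsallisEntropyVec q (![a + b, c + d]) =
      -((((a + b) ^ q - (a + b)) + ((c + d) ^ q - (c + d))) / (q - 1)) := by
    simp only [tsallisEntropyVec, Fin.sum_univ_two, Matrix.cons_val_zero, Matrix.cons_val_one,
      Matrix.head_cons]
    rw [mul_lnq_eq hq hab, mul_lnq_eq hq hcd]
    ring
  have e3 : tsallisEntropyVec q (![a + c, b + d]) =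
      -((((a + c) ^ q - (a + c)) + ((b + d) ^ q - (b + d))) / (q - 1)) := by
    simp only [tsallisEntropyVec, Fin.sum_univ_two, Matrix.cons_val_zero, Matrix.cons_val_one,
      Matrix.head_cons]
    rw [mul_lnq_eq hq hac, mul_lnq_eq hq hbd]
    ring
  rw [e1, e2, e3, ← neg_add, neg_le_neg_iff]
  have key := core_ineq hq ha hb hc hd hsum
  rw [← add_div, div_le_div_iff₀ hq1 hq1]
  nlinarith [key]
end

section
/- Fix q > 1. Let ρ_123 be the 8×8 density matrix on C^2 ⊗ C^2 ⊗ C^2 with entries ρ[3,3] = ρ[3,5] = ρ[5,3] = ρ[5,5] = ρ[4,4] = ρ[4,6] = ρ[6,4] = ρ[6,6] = 1/4 (1-based indexing) and all other entries zero. Then its reduced states satisfy S_q(ρ_123) + S_q(ρ_2) > S_q(ρ_12) + S_q(ρ_23), i.e., the strong subadditivity of the Tsallis entropy fails; explicitly, (2 - 4·(1/2)^q)/(q-1) > (1 - 4·(1/4)^q)/(q-1). -/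
open Matrix Kronecker ComplexOrder

/-- Tsallis entropy `S_q(ρ) = -Tr(ρ ln_q ρ)` of a Hermitian matrix, computed from eigenvalues. -/
noncomputable def tsallisEntropy (q : ℝ) {n : Type*} [Fintype n] [DecidableEq n]
    {ρ : Matrix n n ℂ} (hρ : ρ.IsHermitian) : ℝ :=
  -∑ i, hρ.eigenvalues i * lnq q (hρ.eigenvalues i)

/-- Partial trace over the third tensor factor. -/
noncomputable def ptrace3 {ι1 ι2 ι3 : Type*} [Fintype ι3]
    (A : Matrix (ι1 × ι2 × ι3) (ι1 × ι2 × ι3) ℂ) : Matrix (ι1 × ι2) (ι1 × ι2) ℂ :=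
  fun x y => ∑ k, A (x.1, x.2, k) (y.1, y.2, k)

/-- Partial trace over the first tensor factor. -/
noncomputable def ptrace1 {ι1 ι2 ι3 : Type*} [Fintype ι1]
    (A : Matrix (ι1 × ι2 × ι3) (ι1 × ι2 × ι3) ℂ) : Matrix (ι2 × ι3) (ι2 × ι3) ℂ :=
  fun x y => ∑ i, A (i, x.1, x.2) (i, y.1, y.2)

/-- Partial trace over the first and third tensor factors. -/
noncomputable def ptrace13 {ι1 ι2 ι3 : Type*} [Fintype ι1] [Fintype ι3]
    (A : Matrix (ι1 × ι2 × ι3) (ι1 × ι2 × ι3) ℂ) : Matrix ι2 ι2 ℂ :=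
  fun x y => ∑ i, ∑ k, A (i, x, k) (i, y, k)

/-- The 8×8 counterexample density matrix: in 1-based indexing, the entries
`ρ[3,3] = ρ[3,5] = ρ[5,3] = ρ[5,5] = ρ[4,4] = ρ[4,6] = ρ[6,4] = ρ[6,6] = 1/4`
(positions `n` corresponding to triples via `n - 1 = 4i + 2j + k`), all others zero. -/
noncomputable def ρcex : Matrix (Fin 2 × Fin 2 × Fin 2) (Fin 2 × Fin 2 × Fin 2) ℂ :=
  fun x y =>
    if ((x = (0, 1, 0) ∨ x = (1, 0, 0)) ∧ (y = (0, 1, 0) ∨ y = (1, 0, 0))) ∨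
       ((x = (0, 1, 1) ∨ x = (1, 0, 1)) ∧ (y = (0, 1, 1) ∨ y = (1, 0, 1))) then (1 / 4 : ℂ)
    else 0

/-- The trace of a Hermitian matrix is the sum of its eigenvalues. -/
lemma aux_trace_eq_sum_eig {n : Type*} [Fintype n] [DecidableEq n] {A : Matrix n n ℂ}
    (hA : A.IsHermitian) : A.trace = ∑ i, (hA.eigenvalues i : ℂ) := by
  conv_lhs => rw [hA.spectral_theorem]
  rw [Unitary.conjStarAlgAut_apply, Matrix.trace_mul_cycle,
    (Matrix.mem_unitaryGroup_iff').mp (hA.eigenvectorUnitary).2, one_mul]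
  simp [Matrix.trace_diagonal]

/-- If `M * M = c • M` then every eigenvalue of `M` is `0` or `c`. -/
lemma aux_eig_mem {n : Type*} [Fintype n] [DecidableEq n] {M : Matrix n n ℂ}
    (hM : M.IsHermitian) (c : ℝ) (hsq : M * M = (c : ℂ) • M) (i : n) :
    hM.eigenvalues i = 0 ∨ hM.eigenvalues i = c := by
  set v : n → ℂ := ⇑(hM.eigenvectorBasis i) with hv
  have hvne : v ≠ 0 := by
    intro h
    exact hM.eigenvectorBasis.orthonormal.ne_zero i (by ext j; exact congrFun h j)
  have h1 : M *ᵥ v = (hM.eigenvalues i : ℂ) • v := by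
    have := hM.mulVec_eigenvectorBasis i
    rw [RCLike.real_smul_eq_coe_smul (K := ℂ)] at this
    exact this
  have h2 : ((hM.eigenvalues i : ℂ) * (hM.eigenvalues i : ℂ)) • v
      = ((c : ℂ) * (hM.eigenvalues i : ℂ)) • v := by
    have h := congrArg (fun A => A *ᵥ v) hsq
    simp only [← Matrix.mulVec_mulVec, h1, Matrix.smul_mulVec, Matrix.mulVec_smul,
      smul_smul] at h
    simpa [h1, smul_smul] using h
  have h3 : (hM.eigenvalues i : ℂ) * (hM.eigenvalues i : ℂ)
      = (c : ℂ) * (hM.eigenvalues i : ℂ) := by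
    by_contra hne
    have hz := sub_eq_zero.mpr h2
    rw [← sub_smul] at hz
    exact hvne ((smul_eq_zero.mp hz).resolve_left (sub_ne_zero.mpr hne))
  have h4 : hM.eigenvalues i * hM.eigenvalues i = c * hM.eigenvalues i := by exact_mod_cast h3
  rcases mul_eq_mul_right_iff.mp h4 with h | h
  · right; exact h
  · left; exact h

/-- Tsallis entropy of a Hermitian `M` with `M² = c • M` and unit trace. -/
lemma aux_tsallis_eq (q : ℝ) {n : Type*} [Fintype n] [DecidableEq n] {M : Matrix n n ℂ}
    (hM : M.IsHermitian) (c : ℝ) (hsq : M * M = (c : ℂ) • M) (htr : M.trace = 1) :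
    tsallisEntropy q hM = -(lnq q c) := by
  have hsum : ∑ i, hM.eigenvalues i = 1 := by
    have h := aux_trace_eq_sum_eig hM
    rw [htr] at h
    exact_mod_cast h.symm
  unfold tsallisEntropy
  have hcongr : ∀ i ∈ Finset.univ, hM.eigenvalues i * lnq q (hM.eigenvalues i)
      = hM.eigenvalues i * lnq q c := by
    intro i _
    rcases aux_eig_mem hM c hsq i with h | h
    · rw [h]; ring
    · rw [h]
  rw [Finset.sum_congr rfl hcongr, ← Finset.sum_mul, hsum, one_mul]

lemma aux_sq123 : ρcex * ρcex = ((1/2 : ℝ) : ℂ) • ρcex := by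
  ext ⟨a,b,c⟩ ⟨d,e,f⟩
  simp only [Matrix.mul_apply, Fintype.sum_prod_type, Fin.sum_univ_two, ρcex,
    Matrix.smul_apply, Prod.mk.injEq]
  fin_cases a <;> fin_cases b <;> fin_cases c <;> fin_cases d <;> fin_cases e <;> fin_cases f <;>
    norm_num

lemma aux_tr123 : ρcex.trace = 1 := by
  simp only [Matrix.trace, Matrix.diag, Fintype.sum_prod_type, Fin.sum_univ_two, ρcex,
    Prod.mk.injEq]
  norm_num

lemma aux_sq12 : ptrace3 ρcex * ptrace3 ρcex = ((1 : ℝ) : ℂ) • ptrace3 ρcex := by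
  ext ⟨a,b⟩ ⟨d,e⟩
  simp only [Matrix.mul_apply, Fintype.sum_prod_type, Fin.sum_univ_two, ρcex, ptrace3,
    Matrix.smul_apply, Prod.mk.injEq]
  fin_cases a <;> fin_cases b <;> fin_cases d <;> fin_cases e <;> norm_num

lemma aux_tr12 : (ptrace3 ρcex).trace = 1 := by
  simp only [Matrix.trace, Matrix.diag, Fintype.sum_prod_type, Fin.sum_univ_two, ρcex, ptrace3,
    Prod.mk.injEq]
  norm_num

lemma aux_sq23 : ptrace1 ρcex * ptrace1 ρcex = ((1/4 : ℝ) : ℂ) • ptrace1 ρcex := by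
  ext ⟨a,b⟩ ⟨d,e⟩
  simp only [Matrix.mul_apply, Fintype.sum_prod_type, Fin.sum_univ_two, ρcex, ptrace1,
    Matrix.smul_apply, Prod.mk.injEq]
  fin_cases a <;> fin_cases b <;> fin_cases d <;> fin_cases e <;> norm_num

lemma aux_tr23 : (ptrace1 ρcex).trace = 1 := by
  simp only [Matrix.trace, Matrix.diag, Fintype.sum_prod_type, Fin.sum_univ_two, ρcex, ptrace1,
    Prod.mk.injEq]
  norm_num

lemma aux_sq2 : ptrace13 ρcex * ptrace13 ρcex = ((1/2 : ℝ) : ℂ) • ptrace13 ρcex := by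
  ext a d
  simp only [Matrix.mul_apply, Fin.sum_univ_two, ρcex, ptrace13, Matrix.smul_apply, Prod.mk.injEq]
  fin_cases a <;> fin_cases d <;> norm_num

lemma aux_tr2 : (ptrace13 ρcex).trace = 1 := by
  simp only [Matrix.trace, Matrix.diag, Fin.sum_univ_two, ρcex, ptrace13, Prod.mk.injEq]
  norm_num

/-- Failure of strong subadditivity of the Tsallis entropy for every `q > 1`. -/
theorem tsallis_ssa_fails (q : ℝ) (hq : 1 < q)
    (h123 : ρcex.IsHermitian) (h12 : (ptrace3 ρcex).IsHermitian)
    (h23 : (ptrace1 ρcex).IsHermitian) (h2 : (ptrace13 ρcex).IsHermitian) :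
    tsallisEntropy q h123 + tsallisEntropy q h2 >
        tsallisEntropy q h12 + tsallisEntropy q h23 ∧
      (2 - 4 * (1 / 2 : ℝ) ^ q) / (q - 1) > (1 - 4 * (1 / 4 : ℝ) ^ q) / (q - 1) := by
  have hqne : q ≠ 1 := by linarith
  have hq1 : (0 : ℝ) < q - 1 := by linarith
  constructor
  · rw [aux_tsallis_eq q h123 (1/2) aux_sq123 aux_tr123,
      aux_tsallis_eq q h2 (1/2) aux_sq2 aux_tr2,
      aux_tsallis_eq q h12 1 aux_sq12 aux_tr12,
      aux_tsallis_eq q h23 (1/4) aux_sq23 aux_tr23]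
    simp only [lnq, if_neg hqne, Real.one_rpow]
    set x : ℝ := (1/2 : ℝ) ^ (q - 1) with hx
    have hx0 : 0 < x := Real.rpow_pos_of_pos (by norm_num) _
    have hx1 : x < 1 := Real.rpow_lt_one (by norm_num) (by norm_num) hq1
    have hquarter : ((1/4 : ℝ)) ^ (q - 1) = x * x := by
      rw [show (1/4 : ℝ) = (1/2) * (1/2) by norm_num,
        Real.mul_rpow (by norm_num) (by norm_num)]
    rw [hquarter, gt_iff_lt, ← sub_pos]
    have heq : -((x - 1) / (q - 1)) + -((x - 1) / (q - 1)) -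
        (-((1 - 1) / (q - 1)) + -((x * x - 1) / (q - 1)))
        = ((1 - x) * (1 - x)) / (q - 1) := by ring
    rw [heq]
    exact div_pos (mul_pos (by linarith) (by linarith)) hq1
  · set y : ℝ := (1/2 : ℝ) ^ q with hy
    have hy0 : 0 < y := Real.rpow_pos_of_pos (by norm_num) _
    have hyh : y < 1/2 := by
      have := Real.rpow_lt_rpow_of_exponent_gt (x := (1/2 : ℝ)) (by norm_num) (by norm_num) hq
      rwa [Real.rpow_one] at this
    have hquarter : ((1/4 : ℝ)) ^ q = y * y := by
      rw [show (1/4 : ℝ) = (1/2) * (1/2) by norm_num,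
        Real.mul_rpow (by norm_num) (by norm_num)]
    rw [hquarter, gt_iff_lt, ← sub_pos]
    have heq : (2 - 4 * y) / (q - 1) - (1 - 4 * (y * y)) / (q - 1)
        = ((1 - 2 * y) * (1 - 2 * y)) / (q - 1) := by ring
    rw [heq]
    exact div_pos (mul_pos (by linarith) (by linarith)) hq1
end

section
/- Let q > 1. Suppose ρ_12 is a pure state on H_1 ⊗ H_2 whose reduced state ρ_2 has S_q(ρ_2) > 0 (i.e., ρ_12 is entangled), and let ρ_3 be a density matrix with rank at least 2 (so S_q(ρ_3) > 0). Then for ρ_123 = ρ_12 ⊗ ρ_3, the strict inequality S_q(ρ_123) + S_q(ρ_2) > S_q(ρ_12) + S_q(ρ_23) holds. -/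
open Matrix Kronecker ComplexOrder

/-- Partial trace over the first tensor factor. -/
noncomputable def ptraceFst {ι1 ι2 : Type*} [Fintype ι1]
    (A : Matrix (ι1 × ι2) (ι1 × ι2) ℂ) : Matrix ι2 ι2 ℂ :=
  fun k l => ∑ i, A (i, k) (i, l)

section AuxCharpoly

open Polynomial

variable {n m : Type*} [Fintype n] [DecidableEq n] [Fintype m] [DecidableEq m]

lemma my_charpoly_conj (U A V : Matrix n n ℂ) (hUV : U * V = 1) :
    (U * A * V).charpoly = A.charpoly := by
  classical
  set f : Matrix n n ℂ →+* Matrix n n ℂ[X] := (Polynomial.C : ℂ →+* ℂ[X]).mapMatrix with hf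
  have hs : Matrix.scalar n (X : ℂ[X]) = (X : ℂ[X]) • (1 : Matrix n n ℂ[X]) := by
    ext i j
    by_cases h : i = j <;> simp [Matrix.scalar_apply, Matrix.one_apply, h,
      Matrix.diagonal_apply]
  have key : charmatrix (U * A * V) = f U * charmatrix A * f V := by
    rw [charmatrix, charmatrix, hs, Matrix.mul_sub, Matrix.sub_mul, Matrix.mul_smul,
      Matrix.smul_mul]
    congr 1
    · rw [Matrix.mul_one, ← _root_.map_mul, hUV, _root_.map_one]
    · simp only [← hf, _root_.map_mul]
  have hdet : (f U).det * (f V).det = 1 := by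
    rw [← Matrix.det_mul, ← _root_.map_mul, hUV, _root_.map_one, Matrix.det_one]
  rw [Matrix.charpoly, key, Matrix.det_mul, Matrix.det_mul, Matrix.charpoly]
  calc (f U).det * (charmatrix A).det * (f V).det
      = (charmatrix A).det * ((f U).det * (f V).det) := by ring
    _ = (charmatrix A).det := by rw [hdet, mul_one]

lemma my_charpoly_diagonal (d : n → ℂ) :
    (Matrix.diagonal d).charpoly = ∏ i, (X - C (d i)) := by
  classical
  have : charmatrix (Matrix.diagonal d) = Matrix.diagonal (fun i => X - C (d i)) := by
    ext i j
    by_cases h : i = j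
    · subst h; simp
    · simp [h, Matrix.diagonal_apply_ne _ h]
  rw [Matrix.charpoly, this, Matrix.det_diagonal]

/-- If a Hermitian matrix is conjugated into a real diagonal matrix by a matrix with a
right inverse equal to its conjugate transpose, then any sum of a function of its eigenvalues
equals the corresponding sum over the diagonal entries. -/
lemma my_eigsum {A : Matrix n n ℂ} (hA : A.IsHermitian) (U : Matrix n n ℂ)
    (hUV : U * star U = 1) (d : n → ℝ)
    (hAU : A = U * Matrix.diagonal (fun i => (d i : ℂ)) * star U) (f : ℝ → ℝ) :
    ∑ i, f (hA.eigenvalues i) = ∑ i, f (d i) := by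
  classical
  have h1 : A.charpoly = ∏ i, (X - C ((hA.eigenvalues i : ℂ))) := by
    conv_lhs => rw [hA.spectral_theorem, Unitary.conjStarAlgAut_apply]
    rw [my_charpoly_conj _ _ _ (Matrix.mem_unitaryGroup_iff.mp (hA.eigenvectorUnitary).2),
      my_charpoly_diagonal]
    rfl
  have h2 : A.charpoly = ∏ i, (X - C ((d i : ℂ))) := by
    conv_lhs => rw [hAU]
    rw [my_charpoly_conj _ _ _ hUV, my_charpoly_diagonal]
  have hroots := congrArg Polynomial.roots (h1.symm.trans h2)
  have hprod : ∀ v : n → ℂ, (∏ i, (X - C (v i))) =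
      ((Finset.univ.val.map v).map fun a => X - C a).prod := by
    intro v
    rw [Multiset.map_map]
    rfl
  rw [hprod, hprod, Polynomial.roots_multiset_prod_X_sub_C,
    Polynomial.roots_multiset_prod_X_sub_C] at hroots
  have hm := congrArg (Multiset.map (fun z : ℂ => f z.re)) hroots
  rw [Multiset.map_map, Multiset.map_map] at hm
  have key : (Finset.univ.val.map (fun i => f (hA.eigenvalues i)))
      = (Finset.univ.val.map (fun i => f (d i))) := by
    simpa [Function.comp] using hm
  exact congrArg Multiset.sum key

lemma my_trace_eq {A : Matrix n n ℂ} (hA : A.IsHermitian) :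
    A.trace = ∑ i, (hA.eigenvalues i : ℂ) := by
  conv_lhs => rw [hA.spectral_theorem, Unitary.conjStarAlgAut_apply]
  rw [Matrix.trace_mul_cycle]
  rw [Unitary.coe_star_mul_self, Matrix.one_mul, Matrix.trace_diagonal]
  rfl

lemma my_star_kron (M : Matrix n n ℂ) (N : Matrix m m ℂ) :
    star (M ⊗ₖ N) = star M ⊗ₖ star N := by
  ext p r
  obtain ⟨i, j⟩ := p; obtain ⟨k, l⟩ := r
  simp [Matrix.star_eq_conjTranspose, Matrix.conjTranspose_apply, star_mul', mul_comm]

lemma my_kron_eigsum {A : Matrix n n ℂ} {B : Matrix m m ℂ} (hA : A.IsHermitian)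
    (hB : B.IsHermitian) (hAB : (A ⊗ₖ B).IsHermitian) (f : ℝ → ℝ) :
    ∑ p : n × m, f (hAB.eigenvalues p)
      = ∑ i, ∑ j, f (hA.eigenvalues i * hB.eigenvalues j) := by
  set U := (hA.eigenvectorUnitary : Matrix n n ℂ) with hUdef
  set V := (hB.eigenvectorUnitary : Matrix m m ℂ) with hVdef
  have hU : U * star U = 1 := Matrix.mem_unitaryGroup_iff.mp hA.eigenvectorUnitary.2
  have hV : V * star V = 1 := Matrix.mem_unitaryGroup_iff.mp hB.eigenvectorUnitary.2
  have hUV : (U ⊗ₖ V) * star (U ⊗ₖ V) = 1 := by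
    rw [my_star_kron, ← Matrix.mul_kronecker_mul, hU, hV, Matrix.one_kronecker_one]
  have hdecomp : A ⊗ₖ B = (U ⊗ₖ V) *
      Matrix.diagonal (fun p : n × m => ((hA.eigenvalues p.1 * hB.eigenvalues p.2 : ℝ) : ℂ)) *
      star (U ⊗ₖ V) := by
    conv_lhs => rw [hA.spectral_theorem, hB.spectral_theorem, Unitary.conjStarAlgAut_apply,
      Unitary.conjStarAlgAut_apply]
    rw [my_star_kron, Matrix.mul_kronecker_mul, Matrix.mul_kronecker_mul,
      Matrix.diagonal_kronecker_diagonal]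
    congr 2
    funext p
    simp [Function.comp, Complex.ofReal_mul]
  rw [my_eigsum hAB (U ⊗ₖ V) hUV _ hdecomp f]
  exact Fintype.sum_prod_type _

end AuxCharpoly

section AuxPtrace

variable {ι1 ι2 : Type*} [Fintype ι1] [Fintype ι2] [DecidableEq ι1] [DecidableEq ι2]

omit [DecidableEq ι1] [DecidableEq ι2] in
lemma my_ptrace_trace (A : Matrix (ι1 × ι2) (ι1 × ι2) ℂ) :
    (ptraceFst A).trace = A.trace := by
  simp only [Matrix.trace, Matrix.diag, ptraceFst, Fintype.sum_prod_type]
  exact Finset.sum_comm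

omit [DecidableEq ι2] in
lemma my_ptrace_psd {A : Matrix (ι1 × ι2) (ι1 × ι2) ℂ} (hA : A.PosSemidef)
    (hH : (ptraceFst A).IsHermitian) : (ptraceFst A).PosSemidef := by
  refine .of_dotProduct_mulVec_nonneg hH fun x => ?_
  have hL : dotProduct (star x) (ptraceFst A *ᵥ x)
      = ∑ i : ι1, ∑ k : ι2, ∑ l : ι2, star (x k) * (A (i, k) (i, l) * x l) := by
    simp only [dotProduct, mulVec, ptraceFst, Pi.star_apply, Finset.mul_sum, Finset.sum_mul]
    calc (∑ k : ι2, ∑ l : ι2, ∑ i : ι1, star (x k) * (A (i, k) (i, l) * x l))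
        = ∑ k : ι2, ∑ i : ι1, ∑ l : ι2, star (x k) * (A (i, k) (i, l) * x l) :=
          Finset.sum_congr rfl fun k _ => Finset.sum_comm
      _ = ∑ i : ι1, ∑ k : ι2, ∑ l : ι2, star (x k) * (A (i, k) (i, l) * x l) :=
          Finset.sum_comm
  have hR : ∀ i : ι1, dotProduct (star fun p : ι1 × ι2 => if p.1 = i then x p.2 else 0)
      (A *ᵥ fun p : ι1 × ι2 => if p.1 = i then x p.2 else 0)
      = ∑ k : ι2, ∑ l : ι2, star (x k) * (A (i, k) (i, l) * x l) := by
    intro i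
    simp only [dotProduct, mulVec, Pi.star_apply, Fintype.sum_prod_type, apply_ite, star_zero,
      mul_ite, mul_zero, ite_mul, zero_mul, Finset.sum_ite_irrel, Finset.sum_const_zero,
      Finset.sum_ite_eq', Finset.sum_ite_eq, Finset.mem_univ, if_true, Finset.mul_sum]
  rw [hL]
  refine Finset.sum_nonneg fun i _ => ?_
  rw [← hR i]
  exact hA.dotProduct_mulVec_nonneg _

end AuxPtrace

section AuxEntropy

lemma my_neg_g {q x : ℝ} (hq : 1 < q) (hx : 0 ≤ x) :
    -(x * lnq q x) = (x - x ^ q) / (q - 1) := by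
  have hxq : x * x ^ (q - 1) = x ^ q := by
    rcases eq_or_lt_of_le hx with h | h
    · rw [← h, Real.zero_rpow (by linarith : q ≠ 0)]
      ring
    · calc x * x ^ (q - 1) = x ^ (1 : ℝ) * x ^ (q - 1) := by rw [Real.rpow_one]
        _ = x ^ (1 + (q - 1)) := (Real.rpow_add h 1 (q - 1)).symm
        _ = x ^ q := by ring_nf
  rw [lnq, if_neg hq.ne']
  rw [mul_div_assoc' x _ _, mul_sub, mul_one, hxq, ← neg_div, neg_sub]

lemma my_entropy_eq {n : Type*} [Fintype n] [DecidableEq n] {q : ℝ} (hq : 1 < q)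
    {A : Matrix n n ℂ} (hA : A.IsHermitian) (hnn : ∀ i, 0 ≤ hA.eigenvalues i)
    (hsum : ∑ i, hA.eigenvalues i = 1) :
    tsallisEntropy q hA = (1 - ∑ i, hA.eigenvalues i ^ q) / (q - 1) := by
  rw [tsallisEntropy]
  calc -∑ i, hA.eigenvalues i * lnq q (hA.eigenvalues i)
      = ∑ i, (hA.eigenvalues i - hA.eigenvalues i ^ q) / (q - 1) := by
        rw [← Finset.sum_neg_distrib]
        exact Finset.sum_congr rfl fun i _ => my_neg_g hq (hnn i)
    _ = ((∑ i, hA.eigenvalues i) - ∑ i, hA.eigenvalues i ^ q) / (q - 1) := by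
        rw [← Finset.sum_div, Finset.sum_sub_distrib]
    _ = (1 - ∑ i, hA.eigenvalues i ^ q) / (q - 1) := by rw [hsum]

lemma my_kron_entropy {n m : Type*} [Fintype n] [DecidableEq n] [Fintype m] [DecidableEq m]
    {q : ℝ} (hq : 1 < q) {A : Matrix n n ℂ} {B : Matrix m m ℂ}
    (hA : A.IsHermitian) (hB : B.IsHermitian) (hAB : (A ⊗ₖ B).IsHermitian)
    (hnnA : ∀ i, 0 ≤ hA.eigenvalues i) (hnnB : ∀ j, 0 ≤ hB.eigenvalues j)
    (hsA : ∑ i, hA.eigenvalues i = 1) (hsB : ∑ j, hB.eigenvalues j = 1) :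
    tsallisEntropy q hAB
      = (1 - (∑ i, hA.eigenvalues i ^ q) * (∑ j, hB.eigenvalues j ^ q)) / (q - 1) := by
  have hk := my_kron_eigsum hA hB hAB (fun x => x * lnq q x)
  rw [tsallisEntropy, hk]
  calc -∑ i, ∑ j, (hA.eigenvalues i * hB.eigenvalues j) *
          lnq q (hA.eigenvalues i * hB.eigenvalues j)
      = ∑ i, ∑ j, (hA.eigenvalues i * hB.eigenvalues j
          - hA.eigenvalues i ^ q * hB.eigenvalues j ^ q) / (q - 1) := by
        rw [← Finset.sum_neg_distrib]
        refine Finset.sum_congr rfl fun i _ => ?_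
        rw [← Finset.sum_neg_distrib]
        refine Finset.sum_congr rfl fun j _ => ?_
        rw [my_neg_g hq (mul_nonneg (hnnA i) (hnnB j)),
          Real.mul_rpow (hnnA i) (hnnB j)]
    _ = ((∑ i, ∑ j, hA.eigenvalues i * hB.eigenvalues j)
          - ∑ i, ∑ j, hA.eigenvalues i ^ q * hB.eigenvalues j ^ q) / (q - 1) := by
        simp only [← Finset.sum_div, Finset.sum_sub_distrib]
    _ = (1 - (∑ i, hA.eigenvalues i ^ q) * (∑ j, hB.eigenvalues j ^ q)) / (q - 1) := by
        rw [← Finset.sum_mul_sum, ← Finset.sum_mul_sum, hsA, hsB, one_mul]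

end AuxEntropy

/-- If `ρ_12` is an entangled pure state (rank one, with `S_q(ρ_2) > 0`) and `ρ_3` has rank at
least 2, then for `ρ_123 = ρ_12 ⊗ ρ_3` the strong subadditivity of the Tsallis entropy fails
strictly for every `q > 1`.  Here `ρ_2 = Tr_1 ρ_12` and `ρ_23 = ρ_2 ⊗ ρ_3`. -/
theorem tsallis_ssa_fails_entangled_product (q : ℝ) (hq : 1 < q) {d1 d2 d3 : ℕ}
    {ρ12 : Matrix (Fin d1 × Fin d2) (Fin d1 × Fin d2) ℂ}
    {ρ3 : Matrix (Fin d3) (Fin d3) ℂ}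
    (h12 : ρ12.PosSemidef) (htr12 : ρ12.trace = 1) (hpure : ρ12.rank = 1)
    (h3 : ρ3.PosSemidef) (htr3 : ρ3.trace = 1) (hrank3 : 2 ≤ ρ3.rank)
    (h2 : (ptraceFst ρ12).IsHermitian) (hent : 0 < tsallisEntropy q h2)
    (h123 : (ρ12 ⊗ₖ ρ3).IsHermitian) (h23 : ((ptraceFst ρ12) ⊗ₖ ρ3).IsHermitian) :
    tsallisEntropy q h123 + tsallisEntropy q h2 >
      tsallisEntropy q h12.1 + tsallisEntropy q h23 := by
  have hq1 : (0 : ℝ) < q - 1 := by linarith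
  -- basic spectral data
  have hnn12 : ∀ i, 0 ≤ h12.1.eigenvalues i := h12.eigenvalues_nonneg
  have hnn3 : ∀ i, 0 ≤ h3.1.eigenvalues i := h3.eigenvalues_nonneg
  have hsum_of_trace : ∀ {k : Type} [inst : Fintype k] [inst2 : DecidableEq k]
      {A : Matrix k k ℂ} (hA : A.IsHermitian), A.trace = 1 → ∑ i, hA.eigenvalues i = 1 := by
    intro k _ _ A hA htr
    have h := my_trace_eq hA
    rw [htr] at h
    have : ((∑ i, hA.eigenvalues i : ℝ) : ℂ) = ((1 : ℝ) : ℂ) := by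
      push_cast
      rw [← h]
    exact_mod_cast this
  have hs12 : ∑ i, h12.1.eigenvalues i = 1 := hsum_of_trace h12.1 htr12
  have hs3 : ∑ i, h3.1.eigenvalues i = 1 := hsum_of_trace h3.1 htr3
  -- the reduced state ρ2
  have hpsd2 : (ptraceFst ρ12).PosSemidef := my_ptrace_psd h12 h2
  have htr2 : (ptraceFst ρ12).trace = 1 := by rw [my_ptrace_trace, htr12]
  have hnn2 : ∀ i, 0 ≤ h2.eigenvalues i := hpsd2.eigenvalues_nonneg
  have hs2 : ∑ i, h2.eigenvalues i = 1 := hsum_of_trace h2 htr2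
  -- purity : ∑ λ12^q = 1
  have hT12 : ∑ i, h12.1.eigenvalues i ^ q = 1 := by
    have hcard : Fintype.card {i // h12.1.eigenvalues i ≠ 0} = 1 := by
      rw [← h12.1.rank_eq_card_non_zero_eigs, hpure]
    obtain ⟨⟨i₀, hi₀⟩, hall⟩ := Fintype.card_eq_one_iff.mp hcard
    have hzero : ∀ j, j ≠ i₀ → h12.1.eigenvalues j = 0 := by
      intro j hj
      by_contra h
      exact hj (congrArg Subtype.val (hall ⟨j, h⟩))
    have hone : h12.1.eigenvalues i₀ = 1 := by
      rw [← hs12]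
      exact (Finset.sum_eq_single i₀ (fun b _ hb => hzero b hb) (by simp)).symm
    rw [Finset.sum_eq_single i₀ (fun b _ hb => by
      rw [hzero b hb, Real.zero_rpow (by linarith : q ≠ 0)]) (by simp), hone, Real.one_rpow]
  -- entropy formulas
  have hS12 : tsallisEntropy q h12.1 = 0 := by
    rw [my_entropy_eq hq h12.1 hnn12 hs12, hT12, sub_self, zero_div]
  have hS2 : tsallisEntropy q h2 = (1 - ∑ i, h2.eigenvalues i ^ q) / (q - 1) :=
    my_entropy_eq hq h2 hnn2 hs2
  have hS123 : tsallisEntropy q h123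
      = (1 - (∑ i, h12.1.eigenvalues i ^ q) * (∑ j, h3.1.eigenvalues j ^ q)) / (q - 1) :=
    my_kron_entropy hq h12.1 h3.1 h123 hnn12 hnn3 hs12 hs3
  have hS23 : tsallisEntropy q h23
      = (1 - (∑ i, h2.eigenvalues i ^ q) * (∑ j, h3.1.eigenvalues j ^ q)) / (q - 1) :=
    my_kron_entropy hq h2 h3.1 h23 hnn2 hnn3 hs2 hs3
  set T2 := ∑ i, h2.eigenvalues i ^ q with hT2def
  set T3 := ∑ j, h3.1.eigenvalues j ^ q with hT3def
  -- T2 < 1 from entanglement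
  have hT2lt : T2 < 1 := by
    rw [hS2] at hent
    rcases div_pos_iff.mp hent with ⟨ha, hb⟩ | ⟨ha, hb⟩ <;> linarith
  -- T3 < 1 from rank ≥ 2
  have hT3lt : T3 < 1 := by
    have hcard : 1 < Fintype.card {i // h3.1.eigenvalues i ≠ 0} := by
      rw [← h3.1.rank_eq_card_non_zero_eigs]
      omega
    obtain ⟨a, b, hab⟩ := Fintype.exists_pair_of_one_lt_card hcard
    have hlt1 : ∀ k, h3.1.eigenvalues k ≠ 0 → h3.1.eigenvalues k < 1 := by
      intro k hk
      obtain ⟨c, hck⟩ : ∃ c : {i // h3.1.eigenvalues i ≠ 0}, (c : Fin d3) ≠ k := by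
        by_cases ha : (a : Fin d3) = k
        · exact ⟨b, fun hbk => hab (Subtype.ext (ha.trans hbk.symm))⟩
        · exact ⟨a, ha⟩
      have hcpos : 0 < h3.1.eigenvalues c := lt_of_le_of_ne (hnn3 c) (Ne.symm c.2)
      have hsub : h3.1.eigenvalues (c : Fin d3) + h3.1.eigenvalues k
          ≤ ∑ i, h3.1.eigenvalues i := by
        rw [← Finset.sum_pair hck]
        exact Finset.sum_le_sum_of_subset_of_nonneg (Finset.subset_univ _)
          (fun i _ _ => hnn3 i)
      rw [hs3] at hsub
      linarith
    have hle : ∀ k ∈ Finset.univ, h3.1.eigenvalues k ^ q ≤ h3.1.eigenvalues k := by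
      intro k _
      by_cases hk : h3.1.eigenvalues k = 0
      · rw [hk, Real.zero_rpow (by linarith : q ≠ 0)]
      · have hpos : 0 < h3.1.eigenvalues k := lt_of_le_of_ne (hnn3 k) (Ne.symm hk)
        calc h3.1.eigenvalues k ^ q ≤ h3.1.eigenvalues k ^ (1 : ℝ) :=
              Real.rpow_le_rpow_of_exponent_ge hpos (le_of_lt (hlt1 k hk)) (by linarith)
          _ = h3.1.eigenvalues k := Real.rpow_one _
    have hanz : h3.1.eigenvalues (a : Fin d3) ≠ 0 := a.2
    have hstrict : h3.1.eigenvalues (a : Fin d3) ^ q < h3.1.eigenvalues (a : Fin d3) := by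
      have hpos : 0 < h3.1.eigenvalues (a : Fin d3) := lt_of_le_of_ne (hnn3 a) (Ne.symm hanz)
      calc h3.1.eigenvalues (a : Fin d3) ^ q < h3.1.eigenvalues (a : Fin d3) ^ (1 : ℝ) :=
            Real.rpow_lt_rpow_of_exponent_gt hpos (hlt1 a hanz) (by linarith)
        _ = h3.1.eigenvalues (a : Fin d3) := Real.rpow_one _
    calc T3 < ∑ j, h3.1.eigenvalues j :=
          Finset.sum_lt_sum hle ⟨(a : Fin d3), Finset.mem_univ _, hstrict⟩
      _ = 1 := hs3
  -- conclude
  rw [hS12, hS2, hS123, hS23, hT12, one_mul, zero_add, gt_iff_lt, ← add_div,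
    div_lt_div_iff₀ hq1 hq1]
  nlinarith [mul_pos (sub_pos.mpr hT2lt) (sub_pos.mpr hT3lt)]
end

section
/- Let A be a positive definite matrix in M_m(C) ⊗ M_n(C) with A_1 = Tr_2(A) invertible. Then the linear map U : M_m(C) → M_m(C) ⊗ M_n(C) defined by U(X) = (X A_1^{-1/2} ⊗ I_2) A^{1/2} is an isometry with respect to the Hilbert–Schmidt inner products. -/
open Matrix Kronecker ComplexOrder

/-- Partial trace over the second tensor factor. -/
noncomputable def ptrace2 {m n : Type*} [Fintype n] (A : Matrix (m × n) (m × n) ℂ) :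
    Matrix m m ℂ := fun i j => ∑ k, A (i, k) (j, k)

/-- The square root of a positive semidefinite matrix (as defined in the older Mathlib). -/
noncomputable def Matrix.PosSemidef.sqrt {n 𝕜 : Type*} [Fintype n] [RCLike 𝕜] [DecidableEq n]
    {A : Matrix n n 𝕜} (hA : A.PosSemidef) : Matrix n n 𝕜 :=
  (hA.1.eigenvectorUnitary : Matrix n n 𝕜) * diagonal ((↑) ∘ (√·) ∘ hA.1.eigenvalues) *
    (star (hA.1.eigenvectorUnitary : Matrix n n 𝕜))

lemma Matrix.PosSemidef.sqrt_isHermitian {n : Type*} [Fintype n] [DecidableEq n]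
    {A : Matrix n n ℂ} (hA : A.PosSemidef) : hA.sqrt.IsHermitian := by
  unfold Matrix.PosSemidef.sqrt IsHermitian
  have h : star ((RCLike.ofReal : ℝ → ℂ) ∘ (√·) ∘ hA.1.eigenvalues) = (RCLike.ofReal : ℝ → ℂ) ∘ (√·) ∘ hA.1.eigenvalues := by
    funext i; simp
  rw [conjTranspose_mul, conjTranspose_mul, diagonal_conjTranspose, h, ← star_eq_conjTranspose,
    star_star, mul_assoc]
  rfl

lemma Matrix.PosSemidef.sqrt_mul_self {n : Type*} [Fintype n] [DecidableEq n]
    {A : Matrix n n ℂ} (hA : A.PosSemidef) : hA.sqrt * hA.sqrt = A := by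
  unfold Matrix.PosSemidef.sqrt
  have hU : (star (hA.1.eigenvectorUnitary : Matrix n n ℂ)) * (hA.1.eigenvectorUnitary : Matrix n n ℂ) = 1 :=
    Unitary.coe_star_mul_self _
  conv_rhs => rw [hA.1.spectral_theorem, Unitary.conjStarAlgAut_apply]
  simp only [mul_assoc]
  rw [← mul_assoc (star (hA.1.eigenvectorUnitary : Matrix n n ℂ)) _ _, hU, one_mul, ← mul_assoc (diagonal _) (diagonal _),
    diagonal_mul_diagonal]
  congr 3
  funext i
  simp only [Function.comp_apply]
  rw [← RCLike.ofReal_mul, Real.mul_self_sqrt (hA.eigenvalues_nonneg i)]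

/-- The map `U : X ↦ (X A₁^{-1/2} ⊗ I₂) A^{1/2}`, where `A₁ = Tr₂ A`. -/
noncomputable def mapU {m n : ℕ} (A : Matrix (Fin m × Fin n) (Fin m × Fin n) ℂ)
    (hA : A.PosDef) (hA1 : (ptrace2 A).PosDef) (X : Matrix (Fin m) (Fin m) ℂ) :
    Matrix (Fin m × Fin n) (Fin m × Fin n) ℂ :=
  ((X * (hA1.posSemidef.sqrt)⁻¹) ⊗ₖ (1 : Matrix (Fin n) (Fin n) ℂ)) * hA.posSemidef.sqrt

lemma kron_conjT {m n : ℕ} (M : Matrix (Fin m) (Fin m) ℂ) (N : Matrix (Fin n) (Fin n) ℂ) :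
    (M ⊗ₖ N)ᴴ = Mᴴ ⊗ₖ Nᴴ := by
  ext ⟨i, k⟩ ⟨j, l⟩
  simp [conjTranspose_apply, mul_comm]

lemma trace_kron_one_mul {m n : ℕ} (M : Matrix (Fin m) (Fin m) ℂ)
    (A : Matrix (Fin m × Fin n) (Fin m × Fin n) ℂ) :
    ((M ⊗ₖ (1 : Matrix (Fin n) (Fin n) ℂ)) * A).trace = (M * ptrace2 A).trace := by
  simp only [trace, diag_apply, mul_apply, ptrace2, Fintype.sum_prod_type, kroneckerMap_apply,
    one_apply, mul_ite, mul_one, mul_zero, ite_mul, zero_mul, Finset.sum_ite_eq,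
    Finset.mem_univ, if_true, Finset.mul_sum]
  exact Finset.sum_congr rfl fun i _ => Finset.sum_comm ..

/-- `U : X ↦ (X A₁^{-1/2} ⊗ I₂) A^{1/2}` is an isometry for the Hilbert–Schmidt inner
products. -/
theorem mapU_isometry {m n : ℕ} (A : Matrix (Fin m × Fin n) (Fin m × Fin n) ℂ)
    (hA : A.PosDef) (hA1 : (ptrace2 A).PosDef) :
    ∀ X Y : Matrix (Fin m) (Fin m) ℂ,
      ((mapU A hA hA1 X)ᴴ * mapU A hA hA1 Y).trace = (Xᴴ * Y).trace := by
  intro X Y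
  set S := hA1.posSemidef.sqrt with hS
  set B := S⁻¹ with hB
  have hSherm : Sᴴ = S := hA1.posSemidef.sqrt_isHermitian
  have hSS : S * S = ptrace2 A := hA1.posSemidef.sqrt_mul_self
  have hSdet : IsUnit S.det := by
    have : IsUnit (S.det * S.det) := by
      rw [← det_mul, hSS]; exact hA1.isUnit.map detMonoidHom
    exact isUnit_of_mul_isUnit_left this
  have hBS : B * S = 1 := nonsing_inv_mul _ hSdet
  have hSB : S * B = 1 := mul_nonsing_inv _ hSdet
  have hBA1B : B * ptrace2 A * B = 1 := by
    rw [← hSS, ← mul_assoc, mul_assoc B S S, ← mul_assoc, hBS, one_mul, hSB]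
  have hBherm : Bᴴ = B := by
    rw [hB, conjTranspose_nonsing_inv, hSherm]
  have hAherm : (hA.posSemidef.sqrt)ᴴ = hA.posSemidef.sqrt :=
    hA.posSemidef.sqrt_isHermitian
  have hk : ((X * B)ᴴ ⊗ₖ (1 : Matrix (Fin n) (Fin n) ℂ)) *
      ((Y * B) ⊗ₖ (1 : Matrix (Fin n) (Fin n) ℂ))
      = ((X * B)ᴴ * (Y * B)) ⊗ₖ (1 : Matrix (Fin n) (Fin n) ℂ) := by
    rw [← mul_kronecker_mul, one_mul]
  have key : (mapU A hA hA1 X)ᴴ * mapU A hA hA1 Y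
      = hA.posSemidef.sqrt * (((X * B)ᴴ * (Y * B)) ⊗ₖ (1 : Matrix (Fin n) (Fin n) ℂ))
        * hA.posSemidef.sqrt := by
    rw [mapU, mapU, conjTranspose_mul, kron_conjT, conjTranspose_one, hAherm, ← hS, ← hB,
      mul_assoc, ← mul_assoc ((X * B)ᴴ ⊗ₖ (1 : Matrix (Fin n) (Fin n) ℂ)), hk, ← mul_assoc]
  rw [key, trace_mul_cycle, ← mul_assoc, hA.posSemidef.sqrt_mul_self,
    trace_mul_comm, trace_kron_one_mul]
  rw [conjTranspose_mul, hBherm]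
  have h3 : B * Xᴴ * Y * B * ptrace2 A = B * (Xᴴ * Y * (B * ptrace2 A)) := by
    simp only [mul_assoc]
  rw [h3, trace_mul_comm, mul_assoc (Xᴴ * Y), hBA1B, mul_one]
end
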